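/- If F < F̄_min, then Q̄(x) < 0 for all x ∈ (0,1]; in particular the replicator dynamics ẋ = x(1−x)Q̄(x) of the bribery game has no interior equilibrium in (0,1), the gradient of selection x(1−x)Q̄(x) is negative on (0,1), and the population evolves toward full defection (x = 0 is the attracting boundary state). -/

import Mathlib

/-- The bribery-game gradient function Q̄. -/
noncomputable def Qbar (N : ℕ) (c τ β rp α F h γ p q : ℝ) (x : ℝ) : ℝ :=
  F * c / N - c - 2 * α * β * τ * rp + β * τ * rp
    + ((N : ℝ) - 1) / N * γ * h * (q - p)
    - α * β * τ * rp * (∑ k ∈ Finset.range (N - 1), (1 - x) ^ (k + 1))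
    + (1 - α) * β * τ * rp * (∑ k ∈ Finset.range (N - 1), x ^ (k + 1))

/-- The lower threshold F̄_min for the pool multiplier in the bribery game. -/
noncomputable def Fbarmin (N : ℕ) (c τ β rp α h γ p q : ℝ) : ℝ :=
  (N * c - ((N : ℝ) - 1) * γ * h * (q - p) - N * β * τ * rp * (1 - 2 * α)
    - N * ((N : ℝ) - 1) * (1 - α) * β * τ * rp) / c

/-- The upper threshold F̄_max for the pool multiplier in the bribery game. -/
noncomputable def Fbarmax (N : ℕ) (c τ β rp α h γ p q : ℝ) : ℝ :=
  (N * c - ((N : ℝ) - 1) * γ * h * (q - p) - N * β * τ * rp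
    + N * α * β * τ * rp * ((N : ℝ) + 1)) / c

/-- If F < F̄_min then Q̄(x) < 0 on (0,1], the gradient of selection x(1−x)Q̄(x) is
negative on (0,1), and the replicator dynamics of the bribery game has no interior
equilibrium: the population evolves toward full defection. -/
theorem bg_defection_dominance (N : ℕ) (hN : 2 ≤ N) (c τ β rp α F h γ p q : ℝ)
    (hc : 0 < c) (hτ : 0 < τ) (hβ : 0 < β) (hrp : 0 < rp) (hα0 : 0 ≤ α) (hα1 : α ≤ 1)
    (hh : 0 < h) (hγ0 : 0 < γ) (hγ1 : γ ≤ 1) (hp0 : 0 ≤ p) (hp1 : p ≤ 1)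
    (hq0 : 0 ≤ q) (hq1 : q ≤ 1)
    (hF : F < Fbarmin N c τ β rp α h γ p q) :
    (∀ x : ℝ, 0 < x → x ≤ 1 → Qbar N c τ β rp α F h γ p q x < 0) ∧
    (∀ x : ℝ, 0 < x → x < 1 → x * (1 - x) * Qbar N c τ β rp α F h γ p q x < 0) ∧
    ¬∃ x : ℝ, 0 < x ∧ x < 1 ∧ x * (1 - x) * Qbar N c τ β rp α F h γ p q x = 0 := by

  have hNpos : (0:ℝ) < (N:ℝ) := by
    have : (2:ℝ) ≤ (N:ℝ) := by exact_mod_cast hN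
    linarith
  have hN1 : 1 ≤ N := by omega
  have hcast : ((N - 1 : ℕ) : ℝ) = (N:ℝ) - 1 := by
    push_cast [hN1]; ring
  have hK : 0 < β * τ * rp := by positivity
  have hFc : F * c < (N:ℝ) * c - ((N : ℝ) - 1) * γ * h * (q - p)
      - (N:ℝ) * β * τ * rp * (1 - 2 * α)
      - (N:ℝ) * ((N : ℝ) - 1) * (1 - α) * β * τ * rp :=
    (lt_div_iff₀ hc).mp hF
  have key : ∀ x : ℝ, 0 < x → x ≤ 1 → Qbar N c τ β rp α F h γ p q x < 0 := by
    intro x hx0 hx1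
    have hS1 : 0 ≤ ∑ k ∈ Finset.range (N - 1), (1 - x) ^ (k + 1) :=
      Finset.sum_nonneg fun k _ => pow_nonneg (by linarith) _
    have hS2 : ∑ k ∈ Finset.range (N - 1), x ^ (k + 1) ≤ (N:ℝ) - 1 := by
      calc ∑ k ∈ Finset.range (N - 1), x ^ (k + 1)
          ≤ ∑ k ∈ Finset.range (N - 1), 1 :=
            Finset.sum_le_sum fun k _ => pow_le_one₀ hx0.le hx1
        _ = (N:ℝ) - 1 := by simp [hcast]
    have e1 : 0 ≤ α * β * τ * rp * (∑ k ∈ Finset.range (N - 1), (1 - x) ^ (k + 1)) := by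
      have : 0 ≤ α * β * τ * rp := by positivity
      exact mul_nonneg this hS1
    have e2 : (1 - α) * β * τ * rp * (∑ k ∈ Finset.range (N - 1), x ^ (k + 1))
        ≤ (1 - α) * β * τ * rp * ((N:ℝ) - 1) := by
      have h1a : 0 ≤ (1 - α) * β * τ * rp := by
        have : 0 ≤ 1 - α := by linarith
        positivity
      exact mul_le_mul_of_nonneg_left hS2 h1a
    have h3 : F * c / (N:ℝ) < ((N:ℝ) * c - ((N : ℝ) - 1) * γ * h * (q - p)
        - (N:ℝ) * β * τ * rp * (1 - 2 * α)
        - (N:ℝ) * ((N : ℝ) - 1) * (1 - α) * β * τ * rp) / (N:ℝ) := by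
      gcongr
    have h4 : ((N:ℝ) * c - ((N : ℝ) - 1) * γ * h * (q - p)
        - (N:ℝ) * β * τ * rp * (1 - 2 * α)
        - (N:ℝ) * ((N : ℝ) - 1) * (1 - α) * β * τ * rp) / (N:ℝ)
        = c - ((N : ℝ) - 1) / (N:ℝ) * γ * h * (q - p) - β * τ * rp * (1 - 2 * α)
          - ((N : ℝ) - 1) * (1 - α) * β * τ * rp := by
      field_simp
    rw [h4] at h3
    unfold Qbar
    linarith [e1, e2, h3]
  refine ⟨key, ?_, ?_⟩
  · intro x hx0 hx1
    exact mul_neg_of_pos_of_neg (by nlinarith) (key x hx0 hx1.le)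
  · rintro ⟨x, hx0, hx1, hx⟩
    have := mul_neg_of_pos_of_neg (show 0 < x * (1 - x) by nlinarith)
      (key x hx0 hx1.le)
    linarith [this, hx.ge]
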